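/- arXiv:1111.0249 — 2 statements merged into one kernel-verified Lean document; each statement's English description precedes it below -/
import Mathlib

section
/- Let ι be an infinite type and let w : ι → ℕ be a weight function such that w(i) ≥ 1 for every i and such that for every D ∈ ℕ the set {i : w(i) ≤ D} is finite. For n ∈ ℕ let M_w(n) denote the number of finitely supported functions c : ι → ℕ with Σ_i c(i)·w(i) = n. Then each M_w(n) is finite, and M_w grows faster than any polynomial: for all C, g ∈ ℕ there exists n ∈ ℕ with M_w(n) > C·n^g. -/
lemma weighted_partition_count_finite (ι : Type*) (w : ι → ℕ)
    (hw1 : ∀ i, 1 ≤ w i) (hwfin : ∀ D : ℕ, {i : ι | w i ≤ D}.Finite) (n : ℕ) :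
    {c : ι →₀ ℕ | (c.sum fun i m => m * w i) = n}.Finite := by
  set s := {c : ι →₀ ℕ | (c.sum fun i m => m * w i) = n} with hs
  have key : ∀ c ∈ s, ∀ i : ι, c i ≤ n ∧ (c i ≠ 0 → w i ≤ n) := by
    intro c hc i
    by_cases h : c i = 0
    · simp [h]
    · have hi : i ∈ c.support := Finsupp.mem_support_iff.mpr h
      have hle : c i * w i ≤ c.sum fun i m => m * w i := by
        exact Finset.single_le_sum (f := fun j => c j * w j) (fun j _ => Nat.zero_le _) hi
      rw [hc] at hle
      constructor
      · exact le_trans (Nat.le_mul_of_pos_right _ (hw1 i)) hle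
      · intro _
        exact le_trans (Nat.le_mul_of_pos_left _ (Nat.pos_of_ne_zero h)) hle
  rw [← Set.finite_coe_iff]
  let F : ↥s → (((hwfin n).toFinset : Finset ι) → Fin (n + 1)) := fun c j =>
    ⟨c.1 j.1, Nat.lt_succ_of_le ((key c.1 c.2 j.1).1)⟩
  refine Finite.of_injective F ?_
  intro c c' h
  ext i
  show c.1 i = c'.1 i
  by_cases hi : w i ≤ n
  · have hi' : i ∈ (hwfin n).toFinset := by simp [hi]
    have := congrFun h ⟨i, hi'⟩
    exact congrArg Fin.val this
  · have h1 : c.1 i = 0 := by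
      by_contra hne
      exact hi ((key c.1 c.2 i).2 hne)
    have h2 : c'.1 i = 0 := by
      by_contra hne
      exact hi ((key c'.1 c'.2 i).2 hne)
    rw [h1, h2]

/-- Let `ι` be an infinite type and let `w : ι → ℕ` be a weight function such that
`w i ≥ 1` for every `i` and such that for every `D ∈ ℕ` the set `{i | w i ≤ D}` is
finite.  For `n ∈ ℕ` let `M_w(n)` denote the number of finitely supported functions
`c : ι →₀ ℕ` with `Σ_i c(i)·w(i) = n`.  Then each `M_w(n)` is finite, and `M_w` grows
faster than any polynomial: for all `C, g ∈ ℕ` there exists `n ∈ ℕ` with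
`M_w(n) > C·n^g`. -/
theorem weighted_partition_count_superpolynomial (ι : Type*) [Infinite ι] (w : ι → ℕ)
    (hw1 : ∀ i, 1 ≤ w i) (hwfin : ∀ D : ℕ, {i : ι | w i ≤ D}.Finite) :
    (∀ n : ℕ, {c : ι →₀ ℕ | (c.sum fun i m => m * w i) = n}.Finite) ∧
      ∀ C g : ℕ, ∃ n : ℕ,
        C * n ^ g < {c : ι →₀ ℕ | (c.sum fun i m => m * w i) = n}.ncard := by
  have hfin := weighted_partition_count_finite ι w hw1 hwfin
  refine ⟨hfin, ?_⟩
  intro C g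
  -- choose g+2 distinct indices
  let F : Fin (g + 2) ↪ ι := (Fin.valEmbedding).trans (Infinite.natEmbedding ι)
  set W : ℕ := ∏ j : Fin (g + 2), w (F j) with hW
  have hWpos : 0 < W := Finset.prod_pos fun j _ => hw1 _
  have hdvd : ∀ j : Fin (g + 2), w (F j) ∣ W := fun j =>
    Finset.dvd_prod_of_mem _ (Finset.mem_univ j)
  set q : Fin (g + 2) → ℕ := fun j => W / w (F j) with hq
  have hqw : ∀ j, q j * w (F j) = W := fun j => Nat.div_mul_cancel (hdvd j)
  have hqpos : ∀ j, 0 < q j := by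
    intro j
    rcases Nat.eq_zero_or_pos (q j) with h | h
    · exfalso; have := hqw j; rw [h, zero_mul] at this; omega
    · exact h
  set m : ℕ := C * ((g + 1) * W) ^ g + 1 with hm
  have hmpos : 0 < m := Nat.succ_pos _
  set n : ℕ := W * ((g + 1) * m) with hn
  refine ⟨n, ?_⟩
  -- the injection
  set e : (Fin (g + 1) → Fin m) → Fin (g + 2) → ℕ := fun a j =>
    if h : (j : ℕ) < g + 1 then (a ⟨j, h⟩ : ℕ) * q j
    else ((g + 1) * m - ∑ k : Fin (g + 1), (a k : ℕ)) * q j with he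
  have hSle : ∀ a : Fin (g + 1) → Fin m, (∑ k : Fin (g + 1), (a k : ℕ)) ≤ (g + 1) * m := by
    intro a
    calc (∑ k : Fin (g + 1), (a k : ℕ)) ≤ ∑ _k : Fin (g + 1), m :=
          Finset.sum_le_sum fun k _ => le_of_lt (a k).isLt
      _ = (g + 1) * m := by simp [Finset.sum_const, mul_comm]
  set Φ : (Fin (g + 1) → Fin m) → (ι →₀ ℕ) := fun a =>
    Finsupp.embDomain F (Finsupp.equivFunOnFinite.symm (e a)) with hΦ
  have hsum : ∀ a, ((Φ a).sum fun i v => v * w i) = n := by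
    intro a
    rw [hΦ]
    simp only
    rw [Finsupp.sum_embDomain]
    rw [Finsupp.sum_fintype _ _ (by intro j; simp)]
    have : ∀ j, (Finsupp.equivFunOnFinite.symm (e a)) j = e a j := fun j => rfl
    simp only [this]
    have hterm : ∀ j : Fin (g + 2), e a j * w (F j) =
        (if h : (j : ℕ) < g + 1 then (a ⟨j, h⟩ : ℕ)
          else (g + 1) * m - ∑ k : Fin (g + 1), (a k : ℕ)) * W := by
      intro j
      rw [he]
      by_cases h : (j : ℕ) < g + 1 <;> simp [h, mul_assoc, hqw j]
    simp only [hterm]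
    rw [Fin.sum_univ_castSucc]
    have h1 : ∀ j : Fin (g + 1), ((j.castSucc : Fin (g + 2)) : ℕ) < g + 1 := fun j => j.isLt
    have h2 : ¬ ((Fin.last (g + 1) : Fin (g + 2)) : ℕ) < g + 1 := by simp
    simp only [h2, dif_neg, not_false_iff]
    have h3 : ∀ j : Fin (g + 1),
        (if h : ((j.castSucc : Fin (g + 2)) : ℕ) < g + 1 then
          (a ⟨((j.castSucc : Fin (g + 2)) : ℕ), h⟩ : ℕ)
         else (g + 1) * m - ∑ k : Fin (g + 1), (a k : ℕ)) * W = (a j : ℕ) * W := by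
      intro j
      rw [dif_pos (h1 j)]
      have : (⟨((j.castSucc : Fin (g + 2)) : ℕ), h1 j⟩ : Fin (g + 1)) = j :=
        Fin.ext (by simp)
      rw [this]
    rw [Finset.sum_congr rfl fun j _ => h3 j, ← Finset.sum_mul, ← Nat.add_mul,
      Nat.add_sub_cancel' (hSle a), hn, mul_comm]
  have hinj : Function.Injective Φ := by
    intro a a' h
    have h2 : e a = e a' := by
      have := Finsupp.embDomain_injective F h
      have h3 := congrArg Finsupp.equivFunOnFinite this
      simpa using h3
    funext j
    have h4 := congrFun h2 j.castSucc
    rw [he] at h4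
    simp only at h4
    have hlt' : ((j.castSucc : Fin (g + 2)) : ℕ) < g + 1 := by simp; exact Nat.le_of_lt_succ j.isLt
    rw [dif_pos hlt', dif_pos hlt'] at h4
    have h5 := Nat.eq_of_mul_eq_mul_right (hqpos j.castSucc) h4
    have h6 : (⟨((j.castSucc : Fin (g + 2)) : ℕ), hlt'⟩ : Fin (g + 1)) = j :=
      Fin.ext (by simp)
    rw [h6] at h5
    exact Fin.ext h5
  -- cardinality bound
  set s := {c : ι →₀ ℕ | (c.sum fun i v => v * w i) = n} with hsdef
  have hsfin : s.Finite := hfin n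
  have : Finite ↥s := hsfin.to_subtype
  let Φ' : (Fin (g + 1) → Fin m) → ↥s := fun a => ⟨Φ a, hsum a⟩
  have hinj' : Function.Injective Φ' := fun a a' h => hinj (congrArg Subtype.val h)
  have hcard : m ^ (g + 1) ≤ s.ncard := by
    have := Nat.card_le_card_of_injective Φ' hinj'
    rwa [Nat.card_eq_fintype_card, Fintype.card_fun, Fintype.card_fin, Fintype.card_fin,
      Nat.card_coe_set_eq] at this
  refine lt_of_lt_of_le ?_ hcard
  have hlt : C * ((g + 1) * W) ^ g < m := Nat.lt_succ_self _
  have harith : ∀ Cc Ww gg mm : ℕ,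
      Cc * (Ww * ((gg + 1) * mm)) ^ gg = (Cc * ((gg + 1) * Ww) ^ gg) * mm ^ gg := by
    intro Cc Ww gg mm
    have h0 : Ww * ((gg + 1) * mm) = ((gg + 1) * Ww) * mm := by ring
    rw [h0, mul_pow, ← mul_assoc]
  calc C * n ^ g = (C * ((g + 1) * W) ^ g) * m ^ g := harith C W g m
    _ < m * m ^ g := mul_lt_mul_of_pos_right hlt (pow_pos hmpos g)
    _ = m ^ (g + 1) := (mul_comm _ _).trans (pow_succ m g).symm
end

section
/- Fix an integer k ≥ 2. Let S denote the set of admissible sequences I (including the empty sequence) with excess e(I) < k, and weight each I ∈ S by w(I) = k + |I|. For n ∈ ℕ let M_k(n) denote the number of finitely supported functions c : S → ℕ with Σ_{I∈S} c(I)·(k + |I|) = n. Then: (i) S is infinite, each weight w(I) = k + |I| is positive, and for each D the set {I ∈ S : w(I) ≤ D} is finite, so each M_k(n) is finite; and (ii) for every commutative ℕ-graded algebra A over F₂ = Z/2 generated as an F₂-algebra by finitely many homogeneous elements of degree ≥ 1, there exists n ∈ ℕ with M_k(n) > dim_{F₂} A_n. -/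
def IsAdmissible (I : List ℕ) : Prop :=
  (∀ i ∈ I, 0 < i) ∧ I.Chain' (fun a b => 2 * b ≤ a)

def excess : List ℕ → ℤ
  | [] => 0
  | i :: t => 2 * (i : ℤ) - ((i : ℤ) + (t.sum : ℤ))

def AdmBelow (k : ℕ) : Type :=
  {I : List ℕ // IsAdmissible I ∧ excess I < (k : ℤ)}

def admWeight (k : ℕ) (I : AdmBelow k) : ℕ :=
  k + I.1.sum

/-- the list `[2^(r-1), …, 2, 1]`. -/
def geomList : ℕ → List ℕ
  | 0 => []
  | r + 1 => 2 ^ r :: geomList r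

lemma geomList_length (r : ℕ) : (geomList r).length = r := by
  induction r with
  | zero => rfl
  | succ r ih => simp [geomList, ih]

lemma geomList_sum (r : ℕ) : (geomList r).sum + 1 = 2 ^ r := by
  induction r with
  | zero => rfl
  | succ r ih => simp only [geomList, List.sum_cons]; omega

lemma geomList_pos (r : ℕ) : ∀ i ∈ geomList r, 0 < i := by
  induction r with
  | zero => simp [geomList]
  | succ r ih =>
    intro i hi
    rcases List.mem_cons.mp hi with h | h
    · subst h; exact pow_pos (by norm_num) r
    · exact ih i h
  
lemma geomList_head? (r : ℕ) : ∀ y ∈ (geomList r).head?, y = 2 ^ (r - 1) := by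
  cases r with
  | zero => simp [geomList]
  | succ r =>
    intro y hy
    simp only [geomList, List.head?_cons, Option.mem_def, Option.some_inj] at hy
    simp [← hy]

lemma geomList_chain (r : ℕ) : (geomList r).Chain' (fun a b => 2 * b ≤ a) := by
  induction r with
  | zero => exact List.isChain_nil
  | succ r ih =>
    show List.IsChain (fun a b => 2 * b ≤ a) (geomList (r + 1))
    rw [geomList, List.isChain_cons]
    refine ⟨fun y hy => ?_, ih⟩
    rw [geomList_head? r y hy]
    cases r with
    | zero => simp [geomList] at hy
    | succ r => simp [pow_succ]; ring_nf; omega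

lemma geomList_excess (r : ℕ) : excess (geomList r) ≤ 1 := by
  cases r with
  | zero => simp [geomList, excess]
  | succ r =>
    have := geomList_sum r
    simp only [geomList, excess]
    have h := geomList_sum r
    omega

def admGeom (k : ℕ) (hk : 2 ≤ k) (r : ℕ) : AdmBelow k :=
  ⟨geomList r, ⟨geomList_pos r, geomList_chain r⟩,
    lt_of_le_of_lt (geomList_excess r) (by exact_mod_cast hk)⟩

lemma admGeom_injective (k : ℕ) (hk : 2 ≤ k) : Function.Injective (admGeom k hk) := by
  intro r s h
  have : (geomList r).length = (geomList s).length := by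
    rw [show geomList r = geomList s from congrArg Subtype.val h]
  rwa [geomList_length, geomList_length] at this

lemma admGeom_weight (k : ℕ) (hk : 2 ≤ k) (r : ℕ) :
    admWeight k (admGeom k hk r) + 1 = k + 2 ^ r := by
  simp only [admWeight, admGeom]
  have := geomList_sum r
  omega

lemma list_length_le_sum (l : List ℕ) (h : ∀ x ∈ l, 0 < x) : l.length ≤ l.sum := by
  induction l with
  | nil => simp
  | cons a t ih =>
    simp only [List.length_cons, List.sum_cons]
    have ha := h a List.mem_cons_self
    have := ih (fun x hx => h x (List.mem_cons_of_mem a hx))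
    omega

lemma finite_lists (D : ℕ) : {l : List ℕ | l.length ≤ D ∧ ∀ x ∈ l, x ≤ D}.Finite := by
  have h1 : {l : List (Fin (D+1)) | l.length ≤ D}.Finite := List.finite_length_le _ D
  refine Set.Finite.subset (h1.image (List.map Fin.val)) ?_
  rintro l ⟨hlen, hmem⟩
  refine ⟨l.pmap (fun x h => (⟨x, Nat.lt_succ_of_le h⟩ : Fin (D+1))) hmem, ?_, ?_⟩
  · simpa using hlen
  · rw [List.map_pmap]
    simp [List.pmap_eq_map]

lemma admBelow_val_injective (k : ℕ) :
    Function.Injective (fun I : AdmBelow k => I.1) := fun a b h => Subtype.ext h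

lemma finite_wt_le (k D : ℕ) : {I : AdmBelow k | admWeight k I ≤ D}.Finite := by
  refine Set.Finite.subset
    ((finite_lists D).preimage ((admBelow_val_injective k).injOn)) ?_
  intro I hI
  have hsum : I.1.sum ≤ D := by
    simp only [Set.mem_setOf_eq, admWeight] at hI; omega
  have hpos := I.2.1.1
  constructor
  · exact le_trans (list_length_le_sum I.1 hpos) hsum
  · intro x hx
    exact le_trans (List.single_le_sum (fun y _ => Nat.zero_le y) x hx) hsum

lemma finite_sols (k : ℕ) (hk : 2 ≤ k) (n : ℕ) :
    {c : AdmBelow k →₀ ℕ | (c.sum fun I m => m * admWeight k I) = n}.Finite := by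
  have hwpos : ∀ I : AdmBelow k, 0 < admWeight k I := fun I => by unfold admWeight; omega
  have hfin : Finite {I : AdmBelow k // admWeight k I ≤ n} := (finite_wt_le k n).to_subtype
  have key : ∀ c : AdmBelow k →₀ ℕ,
      (c.sum fun I m => m * admWeight k I) = n → ∀ I, c I * admWeight k I ≤ n := by
    intro c hc I
    by_cases h : c I = 0
    · simp [h]
    · rw [← hc, Finsupp.sum]
      exact Finset.single_le_sum (f := fun I => c I * admWeight k I)
        (fun i _ => Nat.zero_le _) (Finsupp.mem_support_iff.mpr h)
  rw [← Set.finite_coe_iff]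
  refine Finite.of_injective
    (fun c : {c : AdmBelow k →₀ ℕ | (c.sum fun I m => m * admWeight k I) = n} =>
      fun J : {I : AdmBelow k // admWeight k I ≤ n} =>
        (⟨c.1 J.1, by
          have h1 := key c.1 c.2 J.1
          have h2 := hwpos J.1
          have : c.1 J.1 ≤ c.1 J.1 * admWeight k J.1 := Nat.le_mul_of_pos_right _ h2
          omega⟩ : Fin (n+1))) ?_
  intro c c' h
  have hzero : ∀ (c0 : AdmBelow k →₀ ℕ), (c0.sum fun I m => m * admWeight k I) = n →
      ∀ I, ¬ admWeight k I ≤ n → c0 I = 0 := by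
    intro c0 hc0 I hI
    by_contra hne
    have h1 := key c0 hc0 I
    have : admWeight k I ≤ c0 I * admWeight k I :=
      Nat.le_mul_of_pos_left _ (Nat.pos_of_ne_zero hne)
    omega
  apply Subtype.ext
  ext I
  by_cases hI : admWeight k I ≤ n
  · have := congrFun h ⟨I, hI⟩
    simpa using congrArg Fin.val this
  · rw [hzero c.1 c.2 I hI, hzero c'.1 c'.2 I hI]


def admL (k : ℕ) (hk : 2 ≤ k) (N : ℕ) : ℕ :=
  ∏ j : Fin (N+1), admWeight k (admGeom k hk (j : ℕ))

lemma sols_lower (k : ℕ) (hk : 2 ≤ k) (N s : ℕ) :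
    (s + 1) ^ N ≤
      {c : AdmBelow k →₀ ℕ |
        (c.sum fun I m => m * admWeight k I) = N * s * admL k hk N}.ncard := by
  classical
  set w : Fin (N+1) → ℕ := fun j => admWeight k (admGeom k hk (j : ℕ)) with hw
  set L : ℕ := admL k hk N with hL
  have hwpos : ∀ j, 0 < w j := fun j => by
    simp only [hw, admWeight]; omega
  have hwdvd : ∀ j, w j ∣ L := fun j =>
    Finset.dvd_prod_of_mem _ (Finset.mem_univ j)
  have hLq : ∀ j, L / w j * w j = L := fun j => Nat.div_mul_cancel (hwdvd j)
  have hLpos : 0 < L := Finset.prod_pos fun j _ => hwpos j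
  have hLqpos : ∀ j, 0 < L / w j := fun j =>
    Nat.div_pos (Nat.le_of_dvd hLpos (hwdvd j)) (hwpos j)
  have hEinj : ∀ j j' : Fin (N+1), j ≠ j' →
      admGeom k hk (j : ℕ) ≠ admGeom k hk (j' : ℕ) := by
    intro j j' hne h
    exact hne (Fin.ext (admGeom_injective k hk h))
  -- the construction
  set t : (Fin N → Fin (s+1)) → Fin (N+1) → ℕ :=
    fun b => Fin.snoc (fun i => (b i : ℕ)) (N * s - ∑ i, (b i : ℕ)) with ht
  have hsumb : ∀ b : Fin N → Fin (s+1), ∑ i, (b i : ℕ) ≤ N * s := by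
    intro b
    calc ∑ i, (b i : ℕ) ≤ ∑ _i : Fin N, s :=
          Finset.sum_le_sum fun i _ => Nat.le_of_lt_succ (b i).2
      _ = N * s := by simp [Finset.sum_const, mul_comm]
  have hsumt : ∀ b, ∑ j, t b j = N * s := by
    intro b
    rw [Fin.sum_univ_castSucc]
    simp only [ht, Fin.snoc_castSucc, Fin.snoc_last]
    have := hsumb b
    omega
  set c : (Fin N → Fin (s+1)) → (AdmBelow k →₀ ℕ) :=
    fun b => ∑ j : Fin (N+1), Finsupp.single (admGeom k hk (j : ℕ)) (L / w j * t b j)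
    with hc
  have happly : ∀ (b : Fin N → Fin (s+1)) (j₀ : Fin (N+1)), c b (admGeom k hk (j₀ : ℕ)) = L / w j₀ * t b j₀ := by
    intro b j₀
    rw [hc]
    simp only []
    rw [Finset.sum_apply']
    rw [Finset.sum_eq_single j₀]
    · rw [Finsupp.single_eq_same]
    · intro j _ hj
      exact Finsupp.single_eq_of_ne' (hEinj j j₀ hj)
    · intro h
      exact absurd (Finset.mem_univ j₀) h
  have hsum : ∀ b, ((c b).sum fun I m => m * admWeight k I) = N * s * L := by
    intro b
    rw [hc]
    simp only []
    rw [← Finsupp.sum_finsetSum_index (fun I => by simp) (fun I m₁ m₂ => add_mul m₁ m₂ _)]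
    have : ∀ j : Fin (N+1),
        (Finsupp.single (admGeom k hk (j : ℕ)) (L / w j * t b j)).sum
          (fun I m => m * admWeight k I) = t b j * L := by
      intro j
      rw [Finsupp.sum_single_index (by simp)]
      calc L / w j * t b j * w j = t b j * (L / w j * w j) := by ring
        _ = t b j * L := by rw [hLq j]
    rw [Finset.sum_congr rfl fun j _ => this j, ← Finset.sum_mul, hsumt b]
  have hcinj : Function.Injective c := by
    intro b b' h
    funext i
    have h1 := happly b (Fin.castSucc i)
    have h2 := happly b' (Fin.castSucc i)
    rw [h] at h1
    have h3 : L / w (Fin.castSucc i) * t b (Fin.castSucc i)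
        = L / w (Fin.castSucc i) * t b' (Fin.castSucc i) := by rw [← h1, h2]
    have h4 := Nat.eq_of_mul_eq_mul_left (hLqpos _) h3
    simp only [ht, Fin.snoc_castSucc] at h4
    exact Fin.ext h4
  -- conclude
  have hfin : Finite ↥{c : AdmBelow k →₀ ℕ |
      (c.sum fun I m => m * admWeight k I) = N * s * admL k hk N} :=
    (finite_sols k hk _).to_subtype
  have hcard : Nat.card (Fin N → Fin (s+1)) = (s+1)^N := by
    simp [Nat.card_eq_fintype_card]
  rw [← Nat.card_coe_set_eq, ← hcard]
  exact Nat.card_le_card_of_injective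
    (fun b => ⟨c b, hsum b⟩) (fun b b' h => hcinj (congrArg Subtype.val h))

open Module in
lemma graded_finrank_le (A : Type) [CommRing A] [Algebra (ZMod 2) A]
    (𝒜 : ℕ → Submodule (ZMod 2) A) [GradedAlgebra 𝒜]
    (g : ℕ) (a : Fin g → A) (d : Fin g → ℕ) (hd : ∀ i, 1 ≤ d i)
    (hmem : ∀ i, a i ∈ 𝒜 (d i))
    (hgen : Algebra.adjoin (ZMod 2) (Set.range a) = ⊤) (n : ℕ) :
    Module.finrank (ZMod 2) (𝒜 n) ≤ (n + 1) ^ g := by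
  classical
  set mon : (Fin g →₀ ℕ) → A := fun m => ∏ i, a i ^ m i with hmon
  have hmon_mem : ∀ m : Fin g →₀ ℕ, mon m ∈ 𝒜 (∑ i, m i * d i) := by
    intro m
    have := SetLike.prod_mem_graded 𝒜 (fun i => m i * d i) (fun i => a i ^ m i)
      (F := Finset.univ) (fun i _ => by
        have := SetLike.pow_mem_graded (A := 𝒜) (m i) (hmem i)
        simpa [smul_eq_mul] using this)
    simpa using this
  set Sn : Set (Fin g →₀ ℕ) := {m | ∑ i, m i * d i = n} with hSn
  -- each m in Sn has all entries ≤ n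
  have hentry : ∀ m ∈ Sn, ∀ i, m i ≤ n := by
    intro m hm i
    have h1 : m i * d i ≤ ∑ j, m j * d j :=
      Finset.single_le_sum (f := fun j => m j * d j) (fun j _ => Nat.zero_le _)
        (Finset.mem_univ i)
    have h2 : m i ≤ m i * d i := Nat.le_mul_of_pos_right _ (hd i)
    have := hm
    simp only [hSn, Set.mem_setOf_eq] at this
    omega
  have hinj : Set.InjOn (fun (m : Fin g →₀ ℕ) => fun i =>
      (min (m i) n : ℕ)) Sn := by
    intro m hm m' hm' h
    ext i
    have := congrFun h i
    have h1 := hentry m hm i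
    have h2 := hentry m' hm' i
    simpa [Nat.min_eq_left h1, Nat.min_eq_left h2] using this
  have hSnfin : Sn.Finite := by
    have : Set.MapsTo (fun (m : Fin g →₀ ℕ) => fun i => (min (m i) n : ℕ)) Sn
        {f : Fin g → ℕ | ∀ i, f i ≤ n} := by
      intro m hm
      exact fun i => min_le_right _ _
    refine Set.Finite.of_finite_image ?_ hinj
    refine Set.Finite.subset (Set.Finite.image (fun f => fun i => (f i : ℕ))
      (Set.finite_univ (α := Fin g → Fin (n+1)))) ?_
    rintro _ ⟨m, hm, rfl⟩
    exact ⟨fun i => ⟨min (m i) n, Nat.lt_succ_of_le (min_le_right _ _)⟩, trivial, rfl⟩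
  have hScard : Sn.ncard ≤ (n + 1) ^ g := by
    rw [← Nat.card_coe_set_eq]
    have : Nat.card (Fin g → Fin (n+1)) = (n+1)^g := by
      simp [Nat.card_eq_fintype_card]
    rw [← this]
    refine Nat.card_le_card_of_injective
      (fun m => fun i => (⟨min (m.1 i) n, Nat.lt_succ_of_le (min_le_right _ _)⟩ : Fin (n+1))) ?_
    intro m m' h
    apply Subtype.ext
    apply hinj m.2 m'.2
    funext i
    have := congrFun h i
    simpa using congrArg Fin.val this
  -- the span claim
  set T : Set A := mon '' Sn with hT
  have hspan : (𝒜 n : Submodule (ZMod 2) A) ≤ Submodule.span (ZMod 2) T := by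
    intro x hx
    have hsurj : ∃ p : MvPolynomial (Fin g) (ZMod 2), MvPolynomial.aeval a p = x := by
      have h1 : (MvPolynomial.aeval (R := ZMod 2) a).range = ⊤ := by
        rw [← Algebra.adjoin_range_eq_range_aeval, hgen]
      have : x ∈ (MvPolynomial.aeval (R := ZMod 2) a).range := h1 ▸ Algebra.mem_top
      exact this
    obtain ⟨p, hp⟩ := hsurj
    have hxsum : x = ∑ m ∈ p.support, (MvPolynomial.coeff m p) • mon m := by
      conv_lhs => rw [← hp, MvPolynomial.as_sum p]
      rw [map_sum]
      refine Finset.sum_congr rfl fun m _ => ?_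
      rw [MvPolynomial.aeval_monomial, Algebra.smul_def]
      congr 1
      rw [Finsupp.prod_pow]
    have hproj : x = ∑ m ∈ p.support,
        (MvPolynomial.coeff m p) • (GradedAlgebra.proj 𝒜 n) (mon m) := by
      have h1 : (GradedAlgebra.proj 𝒜 n) x = x := by
        rw [GradedAlgebra.proj_apply]
        exact DirectSum.decompose_of_mem_same 𝒜 hx
      conv_lhs => rw [← h1]
      conv_lhs => rw [hxsum]
      rw [map_sum]
      refine Finset.sum_congr rfl fun m _ => ?_
      rw [map_smul]
    rw [hproj]
    refine Submodule.sum_mem _ fun m _ => Submodule.smul_mem _ _ ?_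
    by_cases hwt : (∑ i, m i * d i) = n
    · have : (GradedAlgebra.proj 𝒜 n) (mon m) = mon m := by
        rw [GradedAlgebra.proj_apply]
        exact hwt ▸ DirectSum.decompose_of_mem_same 𝒜 (hmon_mem m)
      rw [this]
      exact Submodule.subset_span ⟨m, hwt, rfl⟩
    · have : (GradedAlgebra.proj 𝒜 n) (mon m) = 0 := by
        rw [GradedAlgebra.proj_apply]
        exact DirectSum.decompose_of_mem_ne 𝒜 (hmon_mem m) hwt
      rw [this]
      exact Submodule.zero_mem _
  have hTfin : T.Finite := hSnfin.image mon
  have : FiniteDimensional (ZMod 2) (Submodule.span (ZMod 2) T) :=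
    FiniteDimensional.span_of_finite _ hTfin
  calc Module.finrank (ZMod 2) (𝒜 n)
      ≤ Module.finrank (ZMod 2) (Submodule.span (ZMod 2) T) :=
        Submodule.finrank_mono hspan
    _ ≤ hTfin.toFinset.card := by
        have h := finrank_span_finset_le_card (R := ZMod 2) hTfin.toFinset
        rw [Set.finrank, hTfin.coe_toFinset] at h
        exact h
    _ = T.ncard := (Set.ncard_eq_toFinset_card T hTfin).symm
    _ ≤ Sn.ncard := Set.ncard_image_le hSnfin
    _ ≤ (n + 1) ^ g := hScard

/-- Fix an integer `k ≥ 2`.  Let `S` denote the set of admissible sequences `I`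
(including the empty sequence) with excess `e(I) < k`, weighted by `w(I) = k + |I|`,
and for `n ∈ ℕ` let `M_k(n)` denote the number of finitely supported functions
`c : S → ℕ` with `Σ_{I∈S} c(I)·(k + |I|) = n`.  Then:
(i) `S` is infinite, each weight `w(I) = k + |I|` is positive, for each `D` the set
`{I ∈ S : w(I) ≤ D}` is finite, and each `M_k(n)` is finite; and
(ii) for every commutative `ℕ`-graded algebra `A` over `F₂ = ℤ/2` generated as an
`F₂`-algebra by finitely many homogeneous elements of degree `≥ 1`, there exists
`n ∈ ℕ` with `M_k(n) > dim_{F₂} A_n`. -/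
theorem serre_generators_beat_fg_graded_algebra (k : ℕ) (hk : 2 ≤ k) :
    (Infinite (AdmBelow k) ∧
      (∀ I : AdmBelow k, 0 < admWeight k I) ∧
      (∀ D : ℕ, {I : AdmBelow k | admWeight k I ≤ D}.Finite) ∧
      (∀ n : ℕ,
        {c : AdmBelow k →₀ ℕ | (c.sum fun I m => m * admWeight k I) = n}.Finite)) ∧
    ∀ (A : Type) (_ : CommRing A) (_ : Algebra (ZMod 2) A)
      (𝒜 : ℕ → Submodule (ZMod 2) A) (_ : GradedAlgebra 𝒜)
      (g : ℕ) (a : Fin g → A),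
      Algebra.adjoin (ZMod 2) (Set.range a) = ⊤ →
      (∀ i : Fin g, ∃ d : ℕ, 1 ≤ d ∧ a i ∈ 𝒜 d) →
      ∃ n : ℕ,
        Module.finrank (ZMod 2) (𝒜 n) <
          {c : AdmBelow k →₀ ℕ | (c.sum fun I m => m * admWeight k I) = n}.ncard := by
  classical
  refine ⟨⟨Infinite.of_injective (admGeom k hk) (admGeom_injective k hk),
    fun I => by simp only [admWeight]; omega,
    fun D => finite_wt_le k D,
    fun n => finite_sols k hk n⟩, ?_⟩
  intro A _ _ 𝒜 _ g a hgen hhom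
  choose d hd hmem using hhom
  have hup : ∀ n, Module.finrank (ZMod 2) (𝒜 n) ≤ (n + 1) ^ g :=
    graded_finrank_le A 𝒜 g a d hd hmem hgen
  set L : ℕ := admL k hk (g + 1) with hLdef
  have hLpos : 0 < L := Finset.prod_pos fun j _ => by simp only [admWeight]; omega
  set s : ℕ := ((g + 1) * L) ^ g with hsdef
  refine ⟨(g + 1) * s * L, ?_⟩
  have hlow := sols_lower k hk (g + 1) s
  have hC1 : 1 ≤ (g + 1) * L := Nat.one_le_iff_ne_zero.mpr (by positivity)
  have h1 : (g + 1) * s * L + 1 ≤ (g + 1) * L * (s + 1) := by nlinarith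
  have h2 : ((g + 1) * s * L + 1) ^ g ≤ ((g + 1) * L * (s + 1)) ^ g :=
    Nat.pow_le_pow_left h1 g
  have h4 : ((g + 1) * L * (s + 1)) ^ g < (s + 1) ^ (g + 1) := by
    rw [mul_pow, pow_succ]
    have hlt : ((g + 1) * L) ^ g < s + 1 := Nat.lt_succ_of_le (le_of_eq hsdef.symm)
    calc ((g + 1) * L) ^ g * (s + 1) ^ g = (s + 1) ^ g * ((g + 1) * L) ^ g := mul_comm _ _
      _ < (s + 1) ^ g * (s + 1) :=
          Nat.mul_lt_mul_of_le_of_lt (le_refl _) hlt (pow_pos (Nat.succ_pos s) g)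
  calc Module.finrank (ZMod 2) (𝒜 ((g + 1) * s * L))
      ≤ ((g + 1) * s * L + 1) ^ g := hup _
    _ ≤ ((g + 1) * L * (s + 1)) ^ g := h2
    _ < (s + 1) ^ (g + 1) := h4
    _ ≤ _ := hlow
end
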